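/- Fix integers d ≥ 1, M ≥ 1. Let J be a complex matrix indexed by (Fin M → Fin d) such that J commutes with U^{⊗M} for every unitary d×d complex matrix U, where U^{⊗M}(x,y) := ∏_i U(x i, y i). Then there exists α ∈ ℂ such that Π_sym^{(M)} J Π_sym^{(M)} = α · Π_sym^{(M)}. (This expresses that the symmetric power of the defining representation of the unitary group is irreducible, so by Schur's lemma the symmetric block of any operator in its commutant is a scalar.) -/

import Mathlib

open Matrix Kronecker BigOperators ComplexOrder

noncomputable section

/-- The matrix of the permutation `π ∈ S_M` acting on the `M` tensor factors of `(ℂ^d)^{⊗M}`. -/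
def permMat (d M : ℕ) (π : Equiv.Perm (Fin M)) :
    Matrix (Fin M → Fin d) (Fin M → Fin d) ℂ :=
  Matrix.of fun x y => if x = y ∘ π.symm then 1 else 0

/-- The orthogonal projector onto the symmetric subspace of `(ℂ^d)^{⊗M}`. -/
def symProj (d M : ℕ) : Matrix (Fin M → Fin d) (Fin M → Fin d) ℂ :=
  ((M.factorial : ℂ))⁻¹ • ∑ π : Equiv.Perm (Fin M), permMat d M π

/-- The dimension `d_S^M = binom(M+d-1, d-1)` of the symmetric subspace of `(ℂ^d)^{⊗M}`. -/
def dS (d M : ℕ) : ℕ := (M + d - 1).choose (d - 1)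

/-- Regard a pair of tuples as a single tuple via `Fin (N+K) ≃ Fin N ⊕ Fin K`. -/
def pairToFun (d N K : ℕ) (x : Fin N → Fin d) (o : Fin K → Fin d) :
    Fin (N + K) → Fin d :=
  fun i => Sum.elim x o (finSumFinEquiv.symm i)

/-- The projector onto the symmetric subspace of `(ℂ^d)^{⊗(N+K)}`, regarded as a matrix
indexed by pairs `((x,o),(x',o'))`. -/
def symProjNK (d N K : ℕ) :
    Matrix ((Fin N → Fin d) × (Fin K → Fin d)) ((Fin N → Fin d) × (Fin K → Fin d)) ℂ :=
  Matrix.of fun p q =>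
    symProj d (N + K) (pairToFun d N K p.1 p.2) (pairToFun d N K q.1 q.2)

/-- Partial trace over the output (second) factor. -/
def trOut {d N K : ℕ}
    (J : Matrix ((Fin N → Fin d) × (Fin K → Fin d)) ((Fin N → Fin d) × (Fin K → Fin d)) ℂ) :
    Matrix (Fin N → Fin d) (Fin N → Fin d) ℂ :=
  Matrix.of fun x x' => ∑ o : Fin K → Fin d, J (x, o) (x', o)

/-- The `M`-fold tensor power `U^{⊗M}` of a `d×d` matrix `U`. -/
def tpowU (d M : ℕ) (U : Matrix (Fin d) (Fin d) ℂ) :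
    Matrix (Fin M → Fin d) (Fin M → Fin d) ℂ :=
  Matrix.of fun x y => ∏ i, U (x i) (y i)

namespace Stmt17
variable {d M : ℕ}

def tp (d M : ℕ) (v : Fin d → ℂ) : (Fin M → Fin d) → ℂ := fun x => ∏ i, v (x i)

def cnt (x : Fin M → Fin d) (j : Fin d) : ℕ := (Finset.univ.filter fun i => x i = j).card


lemma comp_symm_eq_iff (σ : Equiv.Perm (Fin M)) (x z : Fin M → Fin d) :
    x = z ∘ σ.symm ↔ z = x ∘ σ := by
  constructor <;> rintro rfl <;> funext i <;> simp

lemma permMat_mul_apply (σ : Equiv.Perm (Fin M)) (A : Matrix (Fin M → Fin d) (Fin M → Fin d) ℂ)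
    (x y : Fin M → Fin d) : (permMat d M σ * A) x y = A (x ∘ σ) y := by
  simp only [Matrix.mul_apply, permMat, Matrix.of_apply]
  rw [Finset.sum_congr rfl fun z _ => by rw [if_congr (comp_symm_eq_iff σ x z) rfl rfl]]
  simp

lemma mul_permMat_apply (σ : Equiv.Perm (Fin M)) (A : Matrix (Fin M → Fin d) (Fin M → Fin d) ℂ)
    (x y : Fin M → Fin d) : (A * permMat d M σ) x y = A x (y ∘ σ.symm) := by
  simp only [Matrix.mul_apply, permMat, Matrix.of_apply]
  simp [eq_comm]

lemma permMat_mulVec (σ : Equiv.Perm (Fin M)) (w : (Fin M → Fin d) → ℂ)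
    (x : Fin M → Fin d) : (permMat d M σ *ᵥ w) x = w (x ∘ σ) := by
  simp only [Matrix.mulVec, dotProduct, permMat, Matrix.of_apply]
  rw [Finset.sum_congr rfl fun z _ => by rw [if_congr (comp_symm_eq_iff σ x z) rfl rfl]]
  simp

lemma permMat_mul_permMat (σ π : Equiv.Perm (Fin M)) :
    permMat d M σ * permMat d M π = permMat d M (σ * π) := by
  ext x y
  rw [permMat_mul_apply]
  simp only [permMat, Matrix.of_apply]
  congr 1
  simp only [eq_iff_iff]
  constructor
  · intro h; funext i
    have := congrFun h (σ.symm i)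
    exact (by simpa using this : x i = y (π.symm (σ.symm i)))
  · rintro rfl; funext i
    show y ((σ * π).symm (σ i)) = y (π.symm i)
    have : (σ * π).symm (σ i) = π.symm (σ.symm (σ i)) := rfl
    rw [this, Equiv.symm_apply_apply]

lemma permMat_mul_symProj (σ : Equiv.Perm (Fin M)) :
    permMat d M σ * symProj d M = symProj d M := by
  simp only [symProj, Matrix.mul_smul, Finset.mul_sum]
  congr 1
  rw [Finset.sum_congr rfl fun π _ => permMat_mul_permMat σ π]
  exact Fintype.sum_equiv (Equiv.mulLeft σ) _ _ fun π => rfl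

lemma symProj_mul_permMat (σ : Equiv.Perm (Fin M)) :
    symProj d M * permMat d M σ = symProj d M := by
  simp only [symProj, Matrix.smul_mul, Finset.sum_mul]
  congr 1
  rw [Finset.sum_congr rfl fun π _ => permMat_mul_permMat π σ]
  exact Fintype.sum_equiv (Equiv.mulRight σ) _ _ fun π => rfl




lemma tpowU_mul (A B : Matrix (Fin d) (Fin d) ℂ) :
    tpowU d M (A * B) = tpowU d M A * tpowU d M B := by
  ext x y
  simp only [tpowU, Matrix.of_apply, Matrix.mul_apply]
  rw [Finset.prod_univ_sum]
  rw [Fintype.sum_congr _ _ fun z => (Finset.prod_mul_distrib).symm]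
  exact Finset.sum_nbij' id id (by simp) (by simp [Fintype.mem_piFinset]) (by simp) (by simp)
    (by simp)

lemma tpowU_one : tpowU d M (1 : Matrix (Fin d) (Fin d) ℂ) = 1 := by
  ext x y
  simp only [tpowU, Matrix.of_apply, Matrix.one_apply]
  by_cases h : x = y
  · subst h; simp
  · rw [if_neg h]
    obtain ⟨i, hi⟩ := Function.ne_iff.mp h
    exact Finset.prod_eq_zero (Finset.mem_univ i) (by simp [hi])

lemma tpowU_transpose (U : Matrix (Fin d) (Fin d) ℂ) :
    (tpowU d M U)ᵀ = tpowU d M Uᵀ := rfl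

lemma tpowU_mulVec (U : Matrix (Fin d) (Fin d) ℂ) (v : Fin d → ℂ) :
    tpowU d M U *ᵥ tp d M v = tp d M (U *ᵥ v) := by
  funext x
  simp only [tp, Matrix.mulVec, dotProduct, tpowU, Matrix.of_apply]
  rw [Finset.prod_univ_sum]
  rw [Fintype.sum_congr _ _ fun z => (Finset.prod_mul_distrib).symm]
  exact (Finset.sum_nbij' id id (by simp) (by simp [Fintype.mem_piFinset]) (by simp) (by simp)
    (by simp)).symm

lemma tp_dot (u w : Fin d → ℂ) : tp d M u ⬝ᵥ tp d M w = (u ⬝ᵥ w) ^ M := by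
  simp only [tp, dotProduct]
  rw [show (∑ j, u j * w j) ^ M = ∏ _i : Fin M, ∑ j, u j * w j by
    rw [Finset.prod_const]; simp]
  rw [Finset.prod_univ_sum]
  rw [Fintype.sum_congr _ _ fun z => (Finset.prod_mul_distrib).symm]
  exact Finset.sum_nbij' id id (by simp) (by simp [Fintype.mem_piFinset]) (by simp) (by simp)
    (by simp)

lemma tp_star (v : Fin d → ℂ) : tp d M (star v) = star (tp d M v) := by
  funext x
  simp only [tp, Pi.star_apply]
  rw [star_prod]

lemma tp_smul (c : ℂ) (v : Fin d → ℂ) : tp d M (c • v) = c ^ M • tp d M v := by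
  funext x
  simp only [tp, Pi.smul_apply, smul_eq_mul, Finset.prod_mul_distrib, Finset.prod_const]
  simp


variable {d M : ℕ}

lemma permMat_comm_tpowU (σ : Equiv.Perm (Fin M)) (U : Matrix (Fin d) (Fin d) ℂ) :
    permMat d M σ * tpowU d M U = tpowU d M U * permMat d M σ := by
  ext x y
  rw [permMat_mul_apply, mul_permMat_apply]
  simp only [tpowU, Matrix.of_apply, Function.comp]
  rw [← Equiv.prod_comp σ (fun i => U (x i) (y (σ.symm i)))]
  exact Finset.prod_congr rfl fun i _ => by rw [Equiv.symm_apply_apply]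

lemma symProj_comm_tpowU (U : Matrix (Fin d) (Fin d) ℂ) :
    symProj d M * tpowU d M U = tpowU d M U * symProj d M := by
  simp only [symProj, Matrix.smul_mul, Matrix.mul_smul, Finset.sum_mul, Finset.mul_sum]
  congr 1
  exact Finset.sum_congr rfl fun σ _ => permMat_comm_tpowU σ U

lemma sum_mulVec' {ι : Type*} (s : Finset ι) (A : ι → Matrix (Fin M → Fin d) (Fin M → Fin d) ℂ)
    (w : (Fin M → Fin d) → ℂ) : (∑ i ∈ s, A i) *ᵥ w = ∑ i ∈ s, A i *ᵥ w := by
  funext x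
  simp only [Matrix.mulVec, dotProduct, Matrix.sum_apply, Finset.sum_apply,
    Finset.sum_mul]
  exact Finset.sum_comm

lemma permMat_mulVec_tp (σ : Equiv.Perm (Fin M)) (v : Fin d → ℂ) :
    permMat d M σ *ᵥ tp d M v = tp d M v := by
  funext x
  rw [permMat_mulVec]
  exact Equiv.prod_comp σ (fun i => v (x i))

lemma symProj_mulVec_tp (v : Fin d → ℂ) : symProj d M *ᵥ tp d M v = tp d M v := by
  rw [symProj, Matrix.smul_mulVec, sum_mulVec']
  rw [Finset.sum_congr rfl fun σ _ => permMat_mulVec_tp σ v]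
  rw [Finset.sum_const, Finset.card_univ, Fintype.card_perm, Fintype.card_fin]
  rw [← Nat.cast_smul_eq_nsmul ℂ, smul_smul]
  rw [inv_mul_cancel₀ (by exact_mod_cast Nat.factorial_ne_zero M), one_smul]



lemma exists_unitary {d : ℕ} (hd : 1 ≤ d) (v : Fin d → ℂ) (hv : star v ⬝ᵥ v = 1) :
    ∃ U ∈ Matrix.unitaryGroup (Fin d) ℂ,
      U *ᵥ (Pi.single (⟨0, hd⟩ : Fin d) (1:ℂ)) = v := by
  classical
  set E := EuclideanSpace ℂ (Fin d)
  let v' : E := (WithLp.equiv 2 (Fin d → ℂ)).symm v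
  have hinner : ∀ w w' : E, (inner ℂ w w' : ℂ) = ∑ i, (starRingEnd ℂ) (w i) * w' i := by
    intro w w'
    rw [PiLp.inner_apply]
    exact Finset.sum_congr rfl fun i _ => RCLike.inner_apply' _ _
  have hvv : (inner ℂ v' v' : ℂ) = 1 := by
    rw [hinner]
    simpa [dotProduct, v'] using hv
  have hon : Orthonormal ℂ (Set.restrict {(⟨0, hd⟩ : Fin d)} (fun _ => v' : Fin d → E)) := by
    rw [orthonormal_iff_ite]
    intro i j
    have : i = j := Subtype.ext (by
      have hi := i.2; have hj := j.2
      simp only [Set.mem_singleton_iff] at hi hj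
      rw [hi, hj])
    simp [this, hvv]
    left
    have h3 : ‖v'‖ ^ 2 = 1 := by rw [← inner_self_eq_norm_sq (𝕜 := ℂ), hvv]; simp
    exact (pow_eq_one_iff_of_nonneg (norm_nonneg _) two_ne_zero).mp h3
  obtain ⟨b, hb⟩ := Orthonormal.exists_orthonormalBasis_extension_of_card_eq
    (by simpa [E] using (finrank_euclideanSpace (𝕜 := ℂ) (ι := Fin d))) hon
  have hb0 : b ⟨0, hd⟩ = v' := hb _ rfl
  refine ⟨Matrix.of fun i j => (b j : E) i, ?_, ?_⟩
  · rw [Matrix.mem_unitaryGroup_iff']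
    ext p q
    simp only [Matrix.mul_apply, Matrix.star_apply, Matrix.of_apply, Matrix.one_apply]
    have := (orthonormal_iff_ite.mp b.orthonormal) p q
    rw [hinner] at this
    simpa using this
  · funext i
    rw [Matrix.mulVec_single]
    simp [hb0]
    rfl



lemma cnt_le (x : Fin M → Fin d) (j : Fin d) : cnt x j ≤ M := by
  classical
  calc cnt x j ≤ Finset.univ.card := Finset.card_filter_le _ _
  _ = M := by simp

lemma prod_eq_pow_cnt (x : Fin M → Fin d) (g : Fin d → ℂ) :
    ∏ i, g (x i) = ∏ j, g j ^ cnt x j := by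
  classical
  rw [← Finset.prod_fiberwise_of_maps_to (fun i _ => Finset.mem_univ (x i)) (fun i => g (x i))]
  exact Finset.prod_congr rfl fun j _ => by
    rw [Finset.prod_congr rfl (fun i hi => by rw [(Finset.mem_filter.mp hi).2]),
      Finset.prod_const, cnt]

lemma sum_eq_cnt_mul (x : Fin M → Fin d) (g : Fin d → ℕ) :
    ∑ i, g (x i) = ∑ j, cnt x j * g j := by
  classical
  rw [← Finset.sum_fiberwise_of_maps_to (fun i _ => Finset.mem_univ (x i)) (fun i => g (x i))]
  exact Finset.sum_congr rfl fun j _ => by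
    rw [Finset.sum_congr rfl (fun i hi => by rw [(Finset.mem_filter.mp hi).2]),
      Finset.sum_const, cnt, smul_eq_mul]

lemma exists_perm_of_cnt_eq (x x' : Fin M → Fin d) (h : ∀ j, cnt x j = cnt x' j) :
    ∃ σ : Equiv.Perm (Fin M), x = x' ∘ σ := by
  classical
  have hcard : ∀ j, Fintype.card {i // x i = j} = Fintype.card {i // x' i = j} := by
    intro j
    rw [Fintype.card_subtype, Fintype.card_subtype]
    exact h j
  let e : ∀ j : Fin d, {i // x i = j} ≃ {i // x' i = j} :=
    fun j => Fintype.equivOfCardEq (hcard j)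
  let σ : Equiv.Perm (Fin M) :=
    ((Equiv.sigmaFiberEquiv x).symm.trans (Equiv.sigmaCongrRight e)).trans
      (Equiv.sigmaFiberEquiv x')
  refine ⟨σ, funext fun i => ?_⟩
  have : σ i = (e (x i) ⟨i, rfl⟩).val := rfl
  show x i = x' (σ i)
  rw [this, (e (x i) ⟨i, rfl⟩).2]

lemma digits_unique {B : ℕ} (hB : 0 < B) : ∀ {d : ℕ} (a b : Fin d → ℕ),
    (∀ j, a j < B) → (∀ j, b j < B) →
    (∑ j, a j * B ^ (j : ℕ)) = (∑ j, b j * B ^ (j : ℕ)) → a = b := by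
  intro d
  induction d with
  | zero => intro a b _ _ _; funext j; exact absurd j.2 (by omega)
  | succ n ih =>
    intro a b ha hb hsum
    rw [Fin.sum_univ_succ, Fin.sum_univ_succ] at hsum
    have key : ∀ c : Fin (n+1) → ℕ,
        (∑ j : Fin n, c j.succ * B ^ (j.succ : ℕ)) =
        B * ∑ j : Fin n, c j.succ * B ^ (j : ℕ) := by
      intro c
      rw [Finset.mul_sum]
      exact Finset.sum_congr rfl fun j _ => by
        rw [Fin.val_succ, pow_succ]; ring
    rw [key a, key b] at hsum
    simp only [Fin.val_zero, pow_zero, mul_one] at hsum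
    have h0 : a 0 = b 0 := by
      have := congrArg (· % B) hsum
      simpa [Nat.add_mul_mod_self_left, Nat.mod_eq_of_lt (ha 0), Nat.mod_eq_of_lt (hb 0)]
        using this
    have hrest : (fun j : Fin n => a j.succ) = (fun j => b j.succ) := by
      apply ih _ _ (fun j => ha j.succ) (fun j => hb j.succ)
      have : B * (∑ j : Fin n, a j.succ * B ^ (j:ℕ)) = B * ∑ j : Fin n, b j.succ * B ^ (j:ℕ) := by
        omega
      exact Nat.eq_of_mul_eq_mul_left hB this
    funext j
    rcases Fin.eq_zero_or_eq_succ j with rfl | ⟨k, rfl⟩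
    · exact h0
    · exact congrFun hrest k


lemma charSum {L : ℕ} (hL : 0 < L) {ζ : ℂ} (hζ : IsPrimitiveRoot ζ L) {a b : ℕ}
    (ha : a < L) (hb : b < L) :
    ∑ m : Fin L, (ζ ^ a) ^ (m : ℕ) * ((ζ ^ b) ^ (m : ℕ))⁻¹ = if a = b then (L : ℂ) else 0 := by
  have hζ0 : ζ ≠ 0 := by
    intro h
    have := hζ.pow_eq_one
    rw [h, zero_pow (by omega)] at this
    exact zero_ne_one this
  have hterm : ∀ m : Fin L, (ζ ^ a) ^ (m:ℕ) * ((ζ ^ b) ^ (m:ℕ))⁻¹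
      = (ζ ^ a * (ζ ^ b)⁻¹) ^ (m:ℕ) := by
    intro m
    rw [mul_pow, inv_pow]
  rw [Finset.sum_congr rfl fun m _ => hterm m]
  set ξ := ζ ^ a * (ζ ^ b)⁻¹ with hξ
  rw [Fin.sum_univ_eq_sum_range (fun m => ξ ^ m) L]
  by_cases hab : a = b
  · subst hab
    rw [if_pos rfl]
    have : ξ = 1 := mul_inv_cancel₀ (pow_ne_zero _ hζ0)
    simp [this]
  · rw [if_neg hab]
    have hξ1 : ξ ≠ 1 := by
      intro h
      apply hab
      have : ζ ^ a = ζ ^ b := by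
        rw [hξ, mul_inv_eq_one₀ (pow_ne_zero _ hζ0)] at h
        exact h
      exact hζ.pow_inj ha hb this
    have hξL : ξ ^ L = 1 := by
      rw [hξ, mul_pow, inv_pow, ← pow_mul, ← pow_mul, mul_comm a L, mul_comm b L,
        pow_mul, pow_mul, hζ.pow_eq_one, one_pow, one_pow]
      simp
    rw [geom_sum_eq hξ1, hξL]
    simp

lemma conj_exp_root {L : ℕ} (hL : 0 < L) :
    (starRingEnd ℂ) (Complex.exp (2 * Real.pi * Complex.I / L))
      = (Complex.exp (2 * Real.pi * Complex.I / L))⁻¹ := by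
  rw [← Complex.exp_conj, ← Complex.exp_neg]
  congr 1
  simp [map_div₀, Complex.conj_I, Complex.conj_ofNat]
  ring



/-- difference-of-type condition -/
def condP (x₀ y₀ x y : Fin M → Fin d) : Prop :=
  ∀ j, cnt y j + cnt x₀ j = cnt x j + cnt y₀ j

/-- same-type-class condition -/
def clsP (x₀ y₀ x y : Fin M → Fin d) : Prop :=
  (∀ j, cnt x j = cnt x₀ j) ∧ (∀ j, cnt y j = cnt y₀ j)

lemma core (D : Matrix (Fin M → Fin d) (Fin M → Fin d) ℂ)
    (hLinv : ∀ (σ : Equiv.Perm (Fin M)) (x y : Fin M → Fin d), D (x ∘ σ) y = D x y)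
    (hRinv : ∀ (σ : Equiv.Perm (Fin M)) (x y : Fin M → Fin d), D x (y ∘ σ) = D x y)
    (h0 : ∀ v : Fin d → ℂ,
      ∑ x, ∑ y, (∏ i, (starRingEnd ℂ) (v (x i))) * (D x y * ∏ i, v (y i)) = 0) :
    D = 0 := by
  classical
  set L := 2 * M + 1 with hLdef
  have hLpos : 0 < L := by omega
  set ζ := Complex.exp (2 * Real.pi * Complex.I / L) with hζdef
  have hζ : IsPrimitiveRoot ζ L := Complex.isPrimitiveRoot_exp L (by omega)
  have hconj : (starRingEnd ℂ) ζ = ζ⁻¹ := conj_exp_root hLpos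
  set w : (Fin M → Fin d) → ℕ := fun x => ∑ i, L ^ ((x i : ℕ)) with hwdef
  set t : (Fin d → Fin L) → (Fin M → Fin d) → ℕ := fun k x => ∑ i, ((k (x i)) : ℕ) with htdef
  have hwx : ∀ z : Fin M → Fin d, w z = ∑ j, cnt z j * L ^ (j : ℕ) := by
    intro z
    simp only [hwdef]
    exact sum_eq_cnt_mul z (fun j => L ^ (j : ℕ))
  have htk : ∀ (k : Fin d → Fin L) (z : Fin M → Fin d), t k z = ∑ j, cnt z j * (k j : ℕ) := by
    intro k z
    simp only [htdef]
    exact sum_eq_cnt_mul z (fun j => (k j : ℕ))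
  -- Step I1: substitute the special vectors
  have I1 : ∀ (s : ℕ) (k : Fin d → Fin L),
      ∑ x, ∑ y, ((s:ℂ) ^ w x * (ζ⁻¹) ^ t k x) * (D x y * ((s:ℂ) ^ w y * ζ ^ t k y)) = 0 := by
    intro s k
    have key := h0 (fun j => (s:ℂ) ^ (L ^ (j:ℕ)) * ζ ^ ((k j : ℕ)))
    have hA : ∀ x : Fin M → Fin d,
        (∏ i, (starRingEnd ℂ) ((s:ℂ) ^ (L ^ ((x i : ℕ))) * ζ ^ ((k (x i)) : ℕ)))
          = (s:ℂ) ^ w x * (ζ⁻¹) ^ t k x := by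
      intro x
      simp only [_root_.map_mul, map_pow, Complex.conj_natCast, hconj]
      simp only [Finset.prod_mul_distrib, Finset.prod_pow_eq_pow_sum, hwdef, htdef]
    have hB : ∀ y : Fin M → Fin d,
        (∏ i, ((s:ℂ) ^ (L ^ ((y i : ℕ))) * ζ ^ ((k (y i)) : ℕ)))
          = (s:ℂ) ^ w y * ζ ^ t k y := by
      intro y
      simp only [Finset.prod_mul_distrib, Finset.prod_pow_eq_pow_sum, hwdef, htdef]
    rw [← key]
    exact Finset.sum_congr rfl fun x _ => Finset.sum_congr rfl fun y _ => by
      rw [hA x, hB y]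
  -- prove D = 0 entrywise
  ext x₀ y₀
  show D x₀ y₀ = 0
  have hbnd : ∀ (z z' : Fin M → Fin d) (j : Fin d), cnt z j + cnt z' j < L := by
    intro z z' j
    have := cnt_le z j; have := cnt_le z' j
    omega
  -- character sum evaluation
  have hchi : ∀ x y : Fin M → Fin d,
      (∑ k : Fin d → Fin L, ζ ^ (t k y + t k x₀) * (ζ⁻¹) ^ (t k x + t k y₀))
        = if condP x₀ y₀ x y then ((L:ℂ)) ^ d else 0 := by
    intro x y
    have hexp : ∀ (k : Fin d → Fin L) (z z' : Fin M → Fin d),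
        t k z + t k z' = ∑ j, (cnt z j + cnt z' j) * (k j : ℕ) := by
      intro k z z'
      rw [htk k z, htk k z', ← Finset.sum_add_distrib]
      exact Finset.sum_congr rfl fun j _ => by ring
    have hterm : ∀ k : Fin d → Fin L,
        ζ ^ (t k y + t k x₀) * (ζ⁻¹) ^ (t k x + t k y₀)
          = ∏ j, ((ζ ^ (cnt y j + cnt x₀ j)) ^ ((k j : ℕ))
              * (((ζ ^ (cnt x j + cnt y₀ j)) ^ ((k j : ℕ))))⁻¹) := by
      intro k
      rw [hexp k y x₀, hexp k x y₀, ← Finset.prod_pow_eq_pow_sum, ← Finset.prod_pow_eq_pow_sum,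
        ← Finset.prod_mul_distrib]
      exact Finset.prod_congr rfl fun j _ => by
        rw [pow_mul, pow_mul, inv_pow, inv_pow]
    rw [Finset.sum_congr rfl fun k _ => hterm k]
    have hpus := Finset.prod_univ_sum (fun _ : Fin d => (Finset.univ : Finset (Fin L)))
      (fun j m => (ζ ^ (cnt y j + cnt x₀ j)) ^ ((m : ℕ))
        * (((ζ ^ (cnt x j + cnt y₀ j)) ^ ((m : ℕ))))⁻¹)
    rw [Fintype.piFinset_univ] at hpus
    rw [← hpus]
    rw [Finset.prod_congr rfl fun j _ =>
      charSum hLpos hζ (hbnd y x₀ j) (hbnd x y₀ j)]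
    by_cases h : condP x₀ y₀ x y
    · rw [if_pos h, Finset.prod_congr rfl fun j _ => if_pos (h j), Finset.prod_const]
      simp
    · rw [if_neg h]
      simp only [condP] at h
      push_neg at h
      obtain ⟨j, hj⟩ := h
      exact Finset.prod_eq_zero (Finset.mem_univ j) (if_neg hj)
  -- Step I2
  have I2 : ∀ s : ℕ,
      ∑ x, ∑ y, (if condP x₀ y₀ x y then D x y * (s:ℂ) ^ (w x + w y) else 0) * ((L:ℂ)) ^ d
        = 0 := by
    intro s
    have hsumk : ∑ k : Fin d → Fin L, (ζ ^ (t k x₀) * (ζ⁻¹) ^ (t k y₀)) *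
        (∑ x, ∑ y, ((s:ℂ) ^ w x * (ζ⁻¹) ^ t k x) * (D x y * ((s:ℂ) ^ w y * ζ ^ t k y))) = 0 := by
      rw [Finset.sum_congr rfl fun k _ => by rw [I1 s k, mul_zero]]
      exact Finset.sum_const_zero
    have hswap : ∑ k : Fin d → Fin L, (ζ ^ (t k x₀) * (ζ⁻¹) ^ (t k y₀)) *
        (∑ x, ∑ y, ((s:ℂ) ^ w x * (ζ⁻¹) ^ t k x) * (D x y * ((s:ℂ) ^ w y * ζ ^ t k y)))
        = ∑ x, ∑ y, D x y * (s:ℂ) ^ (w x + w y) *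
            (∑ k : Fin d → Fin L, ζ ^ (t k y + t k x₀) * (ζ⁻¹) ^ (t k x + t k y₀)) := by
      calc ∑ k : Fin d → Fin L, (ζ ^ (t k x₀) * (ζ⁻¹) ^ (t k y₀)) *
            (∑ x, ∑ y, ((s:ℂ) ^ w x * (ζ⁻¹) ^ t k x) * (D x y * ((s:ℂ) ^ w y * ζ ^ t k y)))
          = ∑ k : Fin d → Fin L, ∑ x, ∑ y, (ζ ^ (t k x₀) * (ζ⁻¹) ^ (t k y₀)) *
            (((s:ℂ) ^ w x * (ζ⁻¹) ^ t k x) * (D x y * ((s:ℂ) ^ w y * ζ ^ t k y))) := by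
            simp only [Finset.mul_sum]
        _ = ∑ x, ∑ k : Fin d → Fin L, ∑ y, (ζ ^ (t k x₀) * (ζ⁻¹) ^ (t k y₀)) *
            (((s:ℂ) ^ w x * (ζ⁻¹) ^ t k x) * (D x y * ((s:ℂ) ^ w y * ζ ^ t k y))) :=
            Finset.sum_comm
        _ = ∑ x, ∑ y, ∑ k : Fin d → Fin L, (ζ ^ (t k x₀) * (ζ⁻¹) ^ (t k y₀)) *
            (((s:ℂ) ^ w x * (ζ⁻¹) ^ t k x) * (D x y * ((s:ℂ) ^ w y * ζ ^ t k y))) :=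
            Finset.sum_congr rfl fun x _ => Finset.sum_comm
        _ = ∑ x, ∑ y, D x y * (s:ℂ) ^ (w x + w y) *
            (∑ k : Fin d → Fin L, ζ ^ (t k y + t k x₀) * (ζ⁻¹) ^ (t k x + t k y₀)) := by
            refine Finset.sum_congr rfl fun x _ => Finset.sum_congr rfl fun y _ => ?_
            rw [Finset.mul_sum]
            refine Finset.sum_congr rfl fun k _ => ?_
            rw [pow_add, pow_add, pow_add]
            ring
    rw [hswap] at hsumk
    refine Eq.trans ?_ hsumk
    refine Finset.sum_congr rfl fun x _ => Finset.sum_congr rfl fun y _ => ?_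
    rw [hchi x y]
    by_cases h : condP x₀ y₀ x y
    · rw [if_pos h, if_pos h]
    · rw [if_neg h, if_neg h]
      simp
  have I3 : ∀ s : ℕ,
      ∑ x, ∑ y, (if condP x₀ y₀ x y then D x y * (s:ℂ) ^ (w x + w y) else 0) = 0 := by
    intro s
    have hLd : ((L:ℂ)) ^ d ≠ 0 := pow_ne_zero _ (Nat.cast_ne_zero.mpr (by omega))
    have h2 : (∑ x, ∑ y, (if condP x₀ y₀ x y then D x y * (s:ℂ) ^ (w x + w y) else 0)) *
        ((L:ℂ)) ^ d = ∑ x, ∑ y,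
          (if condP x₀ y₀ x y then D x y * (s:ℂ) ^ (w x + w y) else 0) * ((L:ℂ)) ^ d := by
      rw [Finset.sum_mul]
      exact Finset.sum_congr rfl fun x _ => Finset.sum_mul _ _ _
    exact (mul_eq_zero.mp (h2.trans (I2 s))).resolve_right hLd
  -- polynomial argument
  set p : Polynomial ℂ := ∑ x, ∑ y,
    (if condP x₀ y₀ x y then Polynomial.C (D x y) * Polynomial.X ^ (w x + w y) else 0)
    with hpdef
  have heval : ∀ s : ℕ, p.eval ((s:ℂ)) = 0 := by
    intro s
    rw [hpdef, Polynomial.eval_finset_sum]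
    rw [Finset.sum_congr rfl fun x _ => Polynomial.eval_finset_sum _ _ _]
    rw [← I3 s]
    refine Finset.sum_congr rfl fun x _ => Finset.sum_congr rfl fun y _ => ?_
    by_cases h : condP x₀ y₀ x y
    · rw [if_pos h, if_pos h]
      simp
    · rw [if_neg h, if_neg h]
      simp
  have hp0 : p = 0 := by
    refine Polynomial.eq_zero_of_infinite_isRoot p ?_
    exact Set.infinite_of_injective_forall_mem
      (f := fun n : ℕ => ((n:ℂ))) Nat.cast_injective (fun n => heval n)
  have hcoeff : p.coeff (w x₀ + w y₀) = 0 := by rw [hp0]; simp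
  rw [hpdef] at hcoeff
  rw [Polynomial.finset_sum_coeff] at hcoeff
  rw [Finset.sum_congr rfl fun x _ => Polynomial.finset_sum_coeff _ _ _] at hcoeff
  have hiff : ∀ x y : Fin M → Fin d,
      (if condP x₀ y₀ x y then Polynomial.C (D x y) * Polynomial.X ^ (w x + w y) else 0).coeff
        (w x₀ + w y₀) = if clsP x₀ y₀ x y then D x y else 0 := by
    intro x y
    by_cases hc : condP x₀ y₀ x y
    · rw [if_pos hc]
      rw [Polynomial.coeff_C_mul, Polynomial.coeff_X_pow]
      by_cases hw : w x₀ + w y₀ = w x + w y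
      · have hcls : clsP x₀ y₀ x y := by
          have e1 : ∀ z z' : Fin M → Fin d, ∑ j, (cnt z j + cnt z' j) * L ^ (j:ℕ)
              = w z + w z' := by
            intro z z'
            rw [hwx z, hwx z', ← Finset.sum_add_distrib]
            exact Finset.sum_congr rfl fun j _ => by ring
          have hsum : ∑ j, (cnt x j + cnt y j) * L ^ (j:ℕ)
              = ∑ j, (cnt x₀ j + cnt y₀ j) * L ^ (j:ℕ) := by
            rw [e1, e1, ← hw]
          have hdig := digits_unique hLpos _ _
            (fun j => hbnd x y j) (fun j => hbnd x₀ y₀ j) hsum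
          constructor <;> intro j <;>
            · have h1 := congrFun hdig j
              have h2 := hc j
              omega
        rw [if_pos hw, if_pos hcls, mul_one]
      · have hncls : ¬ clsP x₀ y₀ x y := by
          intro hcls
          have e1 : w x = w x₀ := by
            rw [hwx x, hwx x₀]
            exact Finset.sum_congr rfl fun j _ => by rw [hcls.1 j]
          have e2 : w y = w y₀ := by
            rw [hwx y, hwx y₀]
            exact Finset.sum_congr rfl fun j _ => by rw [hcls.2 j]
          exact hw (by omega)
        rw [if_neg hw, if_neg hncls, mul_zero]
    · rw [if_neg hc]
      have hncls : ¬ clsP x₀ y₀ x y := by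
        intro hcls
        refine hc (fun j => ?_)
        rw [hcls.1 j, hcls.2 j]
        omega
      rw [if_neg hncls]
      exact Polynomial.coeff_zero _
  rw [Finset.sum_congr rfl fun x _ => Finset.sum_congr rfl fun y _ => hiff x y] at hcoeff
  -- constancy on classes
  have hDc : ∀ x y : Fin M → Fin d, clsP x₀ y₀ x y → D x y = D x₀ y₀ := by
    intro x y hcls
    obtain ⟨σ, hx⟩ := exists_perm_of_cnt_eq x x₀ hcls.1
    obtain ⟨τ, hy⟩ := exists_perm_of_cnt_eq y y₀ hcls.2
    rw [hx, hy, hLinv σ x₀ (y₀ ∘ τ), hRinv τ x₀ y₀]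
  have h3 : ∑ x, ∑ y, (if clsP x₀ y₀ x y then D x y else 0)
      = (∑ x, ∑ y, (if clsP x₀ y₀ x y then (1:ℂ) else 0)) * D x₀ y₀ := by
    rw [Finset.sum_mul]
    refine Finset.sum_congr rfl fun x _ => ?_
    rw [Finset.sum_mul]
    refine Finset.sum_congr rfl fun y _ => ?_
    by_cases h : clsP x₀ y₀ x y
    · rw [if_pos h, if_pos h, one_mul, hDc x y h]
    · rw [if_neg h, if_neg h, zero_mul]
  have hnat : (∑ x, ∑ y, (if clsP x₀ y₀ x y then (1:ℂ) else 0))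
      = ((∑ x, ∑ y, (if clsP x₀ y₀ x y then (1:ℕ) else 0) : ℕ) : ℂ) := by
    rw [Nat.cast_sum]
    refine Finset.sum_congr rfl fun x _ => ?_
    rw [Nat.cast_sum]
    refine Finset.sum_congr rfl fun y _ => ?_
    by_cases h : clsP x₀ y₀ x y
    · rw [if_pos h, if_pos h, Nat.cast_one]
    · rw [if_neg h, if_neg h, Nat.cast_zero]
  have hpos : 0 < ∑ x, ∑ y, (if clsP x₀ y₀ x y then (1:ℕ) else 0) := by
    have hx₀ : clsP x₀ y₀ x₀ y₀ := ⟨fun _ => rfl, fun _ => rfl⟩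
    calc 0 < (if clsP x₀ y₀ x₀ y₀ then (1:ℕ) else 0) := by rw [if_pos hx₀]; omega
    _ ≤ ∑ y, (if clsP x₀ y₀ x₀ y then (1:ℕ) else 0) :=
        Finset.single_le_sum (f := fun y => (if clsP x₀ y₀ x₀ y then (1:ℕ) else 0))
          (fun _ _ => Nat.zero_le _) (Finset.mem_univ y₀)
    _ ≤ ∑ x, ∑ y, (if clsP x₀ y₀ x y then (1:ℕ) else 0) :=
        Finset.single_le_sum (f := fun x => ∑ y, (if clsP x₀ y₀ x y then (1:ℕ) else 0))
          (fun _ _ => Nat.zero_le _) (Finset.mem_univ x₀)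
  have hfin := h3.symm.trans hcoeff
  rcases mul_eq_zero.mp hfin with h | h
  · exfalso
    rw [hnat] at h
    exact (Nat.cast_ne_zero.mpr (by omega)) h
  · exact h

lemma tpowU_conjTranspose (U : Matrix (Fin d) (Fin d) ℂ) :
    (tpowU d M U)ᴴ = tpowU d M Uᴴ := by
  ext x y
  simp only [Matrix.conjTranspose_apply, tpowU, Matrix.of_apply, star_prod]

end Stmt17

open Stmt17

/-- Schur's lemma for the symmetric power: if a matrix `J` on `(ℂ^d)^{⊗M}` commutes with
`U^{⊗M}` for every unitary `U`, then its symmetric block is a scalar multiple of the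
symmetric projector. -/
theorem stmt17 (d M : ℕ) (hd : 1 ≤ d) (hM : 1 ≤ M)
    (J : Matrix (Fin M → Fin d) (Fin M → Fin d) ℂ)
    (hcomm : ∀ U : Matrix (Fin d) (Fin d) ℂ, U ∈ Matrix.unitaryGroup (Fin d) ℂ →
      J * tpowU d M U = tpowU d M U * J) :
    ∃ α : ℂ, symProj d M * J * symProj d M = α • symProj d M := by
  classical
  set P := symProj d M with hPdef
  set K := symProj d M * J * symProj d M with hKdef
  -- bridged lemmas
  have hPT : ∀ U : Matrix (Fin d) (Fin d) ℂ, P * tpowU d M U = tpowU d M U * P :=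
    fun U => symProj_comm_tpowU U
  have hPv : ∀ v : Fin d → ℂ, P *ᵥ tp d M v = tp d M v := fun v => symProj_mulVec_tp v
  have hPpermL : ∀ σ : Equiv.Perm (Fin M), permMat d M σ * P = P :=
    fun σ => permMat_mul_symProj σ
  have hPpermR : ∀ σ : Equiv.Perm (Fin M), P * permMat d M σ = P :=
    fun σ => symProj_mul_permMat σ
  -- K commutes with tensor powers of unitaries
  have hKT : ∀ U ∈ Matrix.unitaryGroup (Fin d) ℂ, K * tpowU d M U = tpowU d M U * K := by
    intro U hU
    rw [hKdef, ← hPdef]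
    calc P * J * P * tpowU d M U
        = P * J * (P * tpowU d M U) := by rw [mul_assoc]
      _ = P * J * (tpowU d M U * P) := by rw [hPT U]
      _ = P * (J * tpowU d M U) * P := by rw [← mul_assoc, mul_assoc P J _]
      _ = P * (tpowU d M U * J) * P := by rw [hcomm U hU]
      _ = P * tpowU d M U * J * P := by rw [← mul_assoc]
      _ = tpowU d M U * P * J * P := by rw [hPT U]
      _ = tpowU d M U * (P * J * P) := by rw [mul_assoc, mul_assoc, mul_assoc]
  have hconjK : ∀ U ∈ Matrix.unitaryGroup (Fin d) ℂ,
      tpowU d M Uᴴ * K * tpowU d M U = K := by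
    intro U hU
    have hUu : Uᴴ * U = 1 := by
      have := Matrix.mem_unitaryGroup_iff'.mp hU
      rwa [Matrix.star_eq_conjTranspose] at this
    have h3 : tpowU d M Uᴴ * tpowU d M U = 1 := by
      rw [← tpowU_mul, hUu, tpowU_one]
    rw [mul_assoc, hKT U hU, ← mul_assoc, h3, one_mul]
  -- the reference vector and the scalar α
  set e : Fin d → ℂ := Pi.single (⟨0, hd⟩ : Fin d) (1:ℂ) with hedef
  set α : ℂ := tp d M (star e) ⬝ᵥ (K *ᵥ tp d M e) with hαdef
  -- pairing with unit product vectors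
  have hunit : ∀ v : Fin d → ℂ, star v ⬝ᵥ v = 1 →
      tp d M (star v) ⬝ᵥ (K *ᵥ tp d M v) = α := by
    intro v hv
    obtain ⟨U, hU, hUe⟩ := exists_unitary hd v hv
    have htpv : tp d M v = tpowU d M U *ᵥ tp d M e := by rw [tpowU_mulVec, hUe]
    calc tp d M (star v) ⬝ᵥ (K *ᵥ tp d M v)
        = star (tp d M v) ⬝ᵥ (K *ᵥ tp d M v) := by rw [tp_star]
      _ = star (tpowU d M U *ᵥ tp d M e) ⬝ᵥ (K *ᵥ (tpowU d M U *ᵥ tp d M e)) := by rw [htpv]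
      _ = (star (tp d M e) ᵥ* (tpowU d M U)ᴴ) ⬝ᵥ (K *ᵥ (tpowU d M U *ᵥ tp d M e)) := by
          rw [Matrix.star_mulVec]
      _ = star (tp d M e) ⬝ᵥ ((tpowU d M U)ᴴ *ᵥ (K *ᵥ (tpowU d M U *ᵥ tp d M e))) :=
          (Matrix.dotProduct_mulVec _ _ _).symm
      _ = star (tp d M e) ⬝ᵥ (((tpowU d M U)ᴴ * K * tpowU d M U) *ᵥ tp d M e) := by
          rw [Matrix.mulVec_mulVec, Matrix.mulVec_mulVec, Matrix.mul_assoc]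
      _ = star (tp d M e) ⬝ᵥ (K *ᵥ tp d M e) := by rw [tpowU_conjTranspose, hconjK U hU]
      _ = α := by rw [hαdef, tp_star]
  -- scaling: the pairing for arbitrary vectors
  have hscale : ∀ v : Fin d → ℂ,
      tp d M (star v) ⬝ᵥ (K *ᵥ tp d M v) = α * (star v ⬝ᵥ v) ^ M := by
    intro v
    by_cases hv0 : v = 0
    · subst hv0
      have htp0 : tp d M (0 : Fin d → ℂ) = 0 := by
        funext x
        exact Finset.prod_eq_zero (Finset.mem_univ (⟨0, hM⟩ : Fin M)) rfl
      rw [star_zero, htp0]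
      simp [zero_pow (by omega : M ≠ 0)]
    · set tR : ℝ := ∑ j, Complex.normSq (v j) with htR
      have htpos : 0 < tR := by
        rw [htR]
        obtain ⟨j, hj⟩ := Function.ne_iff.mp hv0
        exact Finset.sum_pos' (fun i _ => Complex.normSq_nonneg _)
          ⟨j, Finset.mem_univ j, Complex.normSq_pos.mpr (by simpa using hj)⟩
      have hdot : star v ⬝ᵥ v = (tR : ℂ) := by
        rw [htR]
        push_cast
        simp only [dotProduct, Pi.star_apply]
        exact Finset.sum_congr rfl fun j _ => by
          rw [Complex.star_def, mul_comm, Complex.mul_conj]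
      set s : ℝ := Real.sqrt tR with hs
      have hspos : 0 < s := Real.sqrt_pos.mpr htpos
      set c : ℂ := ((s⁻¹ : ℝ) : ℂ) with hc
      have hcc : c * c * (tR : ℂ) = 1 := by
        rw [hc]
        have : tR = s * s := (Real.mul_self_sqrt htpos.le).symm
        rw [this]
        push_cast
        field_simp
      have hcstar : star c = c := by rw [hc]; exact Complex.conj_ofReal _
      have hu1 : star (c • v) ⬝ᵥ (c • v) = 1 := by
        rw [star_smul, hcstar, smul_dotProduct, dotProduct_smul, hdot,
          smul_eq_mul, smul_eq_mul, ← mul_assoc, hcc]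
      have hKu := hunit (c • v) hu1
      rw [star_smul, hcstar, tp_smul, tp_smul, smul_dotProduct, Matrix.mulVec_smul,
        dotProduct_smul, smul_eq_mul, smul_eq_mul] at hKu
      rw [hdot]
      have hone : c ^ M * c ^ M * (tR:ℂ) ^ M = 1 := by
        rw [← mul_pow, ← mul_pow, hcc, one_pow]
      calc tp d M (star v) ⬝ᵥ (K *ᵥ tp d M v)
          = tp d M (star v) ⬝ᵥ (K *ᵥ tp d M v) * (c ^ M * c ^ M * (tR:ℂ) ^ M) := by
            rw [hone, mul_one]
        _ = (c ^ M * (c ^ M * (tp d M (star v) ⬝ᵥ (K *ᵥ tp d M v)))) * (tR:ℂ) ^ M := by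
            ring
        _ = α * (tR:ℂ) ^ M := by rw [hKu]
  -- the defect matrix
  set Dm : Matrix (Fin M → Fin d) (Fin M → Fin d) ℂ := K - α • P with hDmdef
  have hzero : ∀ v : Fin d → ℂ,
      ∑ x, ∑ y, (∏ i, (starRingEnd ℂ) (v (x i))) * (Dm x y * ∏ i, v (y i)) = 0 := by
    intro v
    have hh : tp d M (star v) ⬝ᵥ (Dm *ᵥ tp d M v) = 0 := by
      rw [hDmdef, Matrix.sub_mulVec, Matrix.smul_mulVec, hPv v,
        dotProduct_sub, dotProduct_smul, tp_dot, hscale v, smul_eq_mul,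
        sub_self]
    refine Eq.trans ?_ hh
    simp only [dotProduct, Matrix.mulVec, tp, Pi.star_apply, Complex.star_def,
      Finset.mul_sum]
  -- invariance of Dm
  have hKpermL : ∀ σ : Equiv.Perm (Fin M), permMat d M σ * K = K := by
    intro σ
    rw [hKdef, ← hPdef, ← mul_assoc, ← mul_assoc, hPpermL σ]
  have hKpermR : ∀ σ : Equiv.Perm (Fin M), K * permMat d M σ = K := by
    intro σ
    rw [hKdef, ← hPdef, mul_assoc, hPpermR σ]
  have hDmpermL : ∀ σ : Equiv.Perm (Fin M), permMat d M σ * Dm = Dm := by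
    intro σ
    rw [hDmdef, Matrix.mul_sub, Matrix.mul_smul, hKpermL σ, hPpermL σ]
  have hDmpermR : ∀ σ : Equiv.Perm (Fin M), Dm * permMat d M σ = Dm := by
    intro σ
    rw [hDmdef, Matrix.sub_mul, Matrix.smul_mul, hKpermR σ, hPpermR σ]
  have hDL : ∀ (σ : Equiv.Perm (Fin M)) (x y : Fin M → Fin d), Dm (x ∘ σ) y = Dm x y := by
    intro σ x y
    rw [← permMat_mul_apply σ Dm x y, hDmpermL σ]
  have hDR : ∀ (σ : Equiv.Perm (Fin M)) (x y : Fin M → Fin d), Dm x (y ∘ σ) = Dm x y := by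
    intro σ x y
    have h1 := mul_permMat_apply σ.symm Dm x y
    rw [hDmpermR σ.symm, Equiv.symm_symm] at h1
    exact h1.symm
  have hDm0 : Dm = 0 := core Dm hDL hDR hzero
  exact ⟨α, sub_eq_zero.mp (hDmdef.symm.trans hDm0)⟩


end
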